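/- Addition theorem for the Poisson–Helgason kernel: for all λ ∈ ℂ, ζ ∈ S, and z, w in the open unit ball B of ℂⁿ, P_{λ,ζ}(φ_w(z)) = P_{λ,ζ}(w) · P_{λ,φ_w(ζ)}(z). -/

import Mathlib

open MeasureTheory Metric Complex
open scoped ENNReal Classical

noncomputable section

/-- `ℂⁿ` as a Euclidean space. -/
abbrev Cn (n : ℕ) := EuclideanSpace ℂ (Fin n)

/-- The Hermitian product `⟨z,w⟩ = Σ z_j conj (w_j)` (linear in the first argument). -/
def herm {n : ℕ} (z w : Cn n) : ℂ := inner ℂ w z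

/-- The Möbius transformation `φ_a(z) = (Q_a z + a) / (1 - ⟨z,a⟩)` of the unit ball,
with `Q_a = ((s_a - 1)/|a|²) a aᴴ - s_a I`, `s_a = (1-|a|²)^(1/2)`; for `a = 0` the
limiting value `φ_0 = -id` is used. -/
def moeb {n : ℕ} (a z : Cn n) : Cn n :=
  if a = 0 then -z
  else
    (1 - herm z a)⁻¹ •
      (((((Real.sqrt (1 - ‖a‖ ^ 2) - 1) / ‖a‖ ^ 2 : ℝ) : ℂ) * herm z a) • a
        - ((Real.sqrt (1 - ‖a‖ ^ 2) : ℝ) : ℂ) • z + a)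


instance (n : ℕ) : MeasurableSpace (Cn n) := MeasurableSpace.comap WithLp.ofLp MeasurableSpace.pi
instance (n : ℕ) : BorelSpace (Cn n) := PiLp.borelSpace 2
instance (n : ℕ) : InnerProductSpace ℝ (Cn n) := InnerProductSpace.rclikeToReal ℂ (Cn n)

/-- The Poisson–Helgason kernel `P_{λ,ζ}(z) = ((1-|z|²)/|1-⟨z,ζ⟩|²)^((n+iλ)/2)`. -/
def Pker (n : ℕ) (lam : ℂ) (ζ z : Cn n) : ℂ :=
  (((1 - ‖z‖ ^ 2) / ‖1 - herm z ζ‖ ^ 2 : ℝ) : ℂ) ^ (((n : ℂ) + Complex.I * lam) / 2)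

/-- The Möbius-invariant measure `dμ(z) = (1-|z|²)^(-n-1) dl(z)` on the open unit ball,
where `l` is the Lebesgue measure normalized so that `l(B) = 1`. -/
def ballMeasure (n : ℕ) : Measure (Cn n) :=
  ((volume : Measure (Cn n)).restrict (ball (0 : Cn n) 1)).withDensity
    fun z => ENNReal.ofReal
      ((volume (ball (0 : Cn n) 1)).toReal⁻¹ * (1 - ‖z‖ ^ 2) ^ (-(n : ℝ) - 1))

/-- Harish-Chandra's `c`-function `c(λ) = 2^(n-iλ) Γ(n)Γ(iλ)/Γ((n+iλ)/2)²`. -/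
def cFun (n : ℕ) (lam : ℂ) : ℂ :=
  (2 : ℂ) ^ ((n : ℂ) - Complex.I * lam) * Complex.Gamma (n : ℂ) * Complex.Gamma (Complex.I * lam) /
    Complex.Gamma (((n : ℂ) + Complex.I * lam) / 2) ^ 2

/-- The Plancherel measure `dν(λ,ζ) = (1/2)|c(λ)|⁻² dλ dσ(ζ)` on `B̂ = ℝ × S`. -/
def freqMeasure (n : ℕ) (σ : Measure (sphere (0 : Cn n) 1)) :
    Measure (ℝ × sphere (0 : Cn n) 1) :=
  ((volume : Measure ℝ).withDensity
    fun lam => ENNReal.ofReal ((1 / 2) * ((‖cFun n (lam : ℂ)‖)⁻¹) ^ 2)).prod σ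

/-- Time-frequency shift `ρ(z,b)ψ = P_b · (ψ ∘ φ_z)` on the ball. -/
def tfShift (n : ℕ) (z : Cn n) (b : ℝ × sphere (0 : Cn n) 1) (ψ : Cn n → ℂ) : Cn n → ℂ :=
  fun w => Pker n (b.1 : ℂ) (b.2 : Cn n) w * ψ (moeb z w)

/-- The voice transform `V_ψ f(z,b) = ⟨f, ρ(z,b)ψ⟩ = ∫ f(w) P_{-λ,ζ}(w) conj(ψ(φ_z(w))) dμ(w)`. -/
def voice (n : ℕ) (ψ f : Cn n → ℂ) (z : Cn n) (b : ℝ × sphere (0 : Cn n) 1) : ℂ :=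
  ∫ w, f w * Pker n (-(b.1 : ℂ)) (b.2 : Cn n) w * (starRingEnd ℂ) (ψ (moeb z w)) ∂(ballMeasure n)

/-- A measure on the unit sphere is unitarily invariant if it is preserved by every
unitary map of `ℂⁿ`. -/
def UnitaryInvariant {n : ℕ} (σ : Measure (sphere (0 : Cn n) 1)) : Prop :=
  ∀ U : Cn n ≃ₗᵢ[ℂ] Cn n,
    Measure.map (fun ζ : sphere (0 : Cn n) 1 =>
      (⟨U ζ.1, by
        rw [mem_sphere_zero_iff_norm, U.norm_map]
        exact mem_sphere_zero_iff_norm.mp ζ.2⟩ : sphere (0 : Cn n) 1)) σ = σ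


namespace PkerAux

variable {n : ℕ}

lemma herm_add_left (x y u : Cn n) : herm (x + y) u = herm x u + herm y u :=
  inner_add_right u x y

lemma herm_sub_left (x y u : Cn n) : herm (x - y) u = herm x u - herm y u :=
  inner_sub_right u x y

lemma herm_neg_left (x u : Cn n) : herm (-x) u = -herm x u :=
  inner_neg_right u x

lemma herm_smul_left (c : ℂ) (x u : Cn n) : herm (c • x) u = c * herm x u :=
  inner_smul_right u x c

lemma herm_add_right (x y u : Cn n) : herm u (x + y) = herm u x + herm u y :=
  inner_add_left x y u

lemma herm_sub_right (x y u : Cn n) : herm u (x - y) = herm u x - herm u y :=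
  inner_sub_left x y u

lemma herm_neg_right (x u : Cn n) : herm u (-x) = -herm u x :=
  inner_neg_left x u

lemma herm_smul_right (c : ℂ) (x u : Cn n) : herm u (c • x) = (starRingEnd ℂ) c * herm u x :=
  inner_smul_left x u c

lemma herm_self (x : Cn n) : herm x x = ((‖x‖ : ℂ)) ^ 2 :=
  inner_self_eq_norm_sq_to_K x

lemma herm_zero_left (u : Cn n) : herm 0 u = 0 := inner_zero_right u

lemma herm_zero_right (u : Cn n) : herm u 0 = 0 := inner_zero_left u

lemma herm_conj (x y : Cn n) : (starRingEnd ℂ) (herm x y) = herm y x :=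
  inner_conj_symm x y

lemma herm_abs_le (x y : Cn n) : ‖herm x y‖ ≤ ‖x‖ * ‖y‖ := by
  have := norm_inner_le_norm (𝕜 := ℂ) y x
  simpa [herm, mul_comm] using this

lemma one_sub_herm_ne_zero {x y : Cn n} (h : ‖x‖ * ‖y‖ < 1) : 1 - herm x y ≠ 0 := by
  intro hc
  have h1 : herm x y = 1 := by linear_combination -hc
  have := herm_abs_le x y
  rw [h1] at this
  simp at this
  linarith

end PkerAux

namespace PkerAux

variable {n : ℕ}

lemma moeb_herm_lemB (a z u : Cn n) (ha : ‖a‖ < 1)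
    (hz : 1 - herm z a ≠ 0) (hu : 1 - herm a u ≠ 0) :
    (1 - herm (moeb a z) u) * (1 - herm z a)
      = (1 - herm z (moeb a u)) * (1 - herm a u) := by
  rcases eq_or_ne a 0 with h0 | h0
  · subst h0
    simp [moeb, herm_neg_left, herm_neg_right, herm_zero_left, herm_zero_right]
  · rw [moeb, moeb, if_neg h0, if_neg h0]
    simp only [herm_smul_left, herm_add_left, herm_sub_left, herm_smul_right, herm_add_right,
      herm_sub_right, herm_self, map_mul, map_sub, map_one, map_inv₀, Complex.conj_ofReal,
      herm_conj]
    set s : ℝ := Real.sqrt (1 - ‖a‖ ^ 2) with hs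
    push_cast
    set p := herm z a
    set q := herm z u
    set r := herm a u
    have hA : ((‖a‖ : ℂ)) ≠ 0 := by
      simpa using norm_ne_zero_iff.mpr h0
    field_simp
    ring

end PkerAux

namespace PkerAux

set_option maxHeartbeats 800000 in
lemma moeb_herm_lemA {n : ℕ} (a z u : Cn n) (ha : ‖a‖ < 1)
    (hz : 1 - herm z a ≠ 0) (hu : 1 - herm a u ≠ 0) :
    (1 - herm (moeb a z) (moeb a u)) * ((1 - herm z a) * (1 - herm a u))
      = (1 - ((‖a‖ : ℂ)) ^ 2) * (1 - herm z u) := by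
  rcases eq_or_ne a 0 with h0 | h0
  · subst h0
    simp [moeb, herm_neg_left, herm_neg_right, herm_zero_left, herm_zero_right]
  · have hAne : ((‖a‖ : ℂ)) ≠ 0 := by simpa using norm_ne_zero_iff.mpr h0
    set S : ℂ := ((Real.sqrt (1 - ‖a‖ ^ 2) : ℝ) : ℂ) with hSdef
    set T : ℂ := (((Real.sqrt (1 - ‖a‖ ^ 2) - 1) / ‖a‖ ^ 2 : ℝ) : ℂ) with hTdef
    set A : ℂ := ((‖a‖ : ℂ)) ^ 2 with hAdef
    have hG2 : S ^ 2 = 1 - A := by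
      rw [hSdef, hAdef]
      have h1 : (Real.sqrt (1 - ‖a‖ ^ 2)) ^ 2 = 1 - ‖a‖ ^ 2 :=
        Real.sq_sqrt (by nlinarith [norm_nonneg a])
      exact_mod_cast congrArg (fun x : ℝ => (x : ℂ)) h1
    have hG1 : T * A = S - 1 := by
      rw [hTdef, hAdef, hSdef]
      have hA2 : (‖a‖ : ℝ) ^ 2 ≠ 0 := pow_ne_zero 2 (norm_ne_zero_iff.mpr h0)
      have h1 : ((Real.sqrt (1 - ‖a‖ ^ 2) - 1) / ‖a‖ ^ 2) * ‖a‖ ^ 2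
          = Real.sqrt (1 - ‖a‖ ^ 2) - 1 := div_mul_cancel₀ _ hA2
      calc (((Real.sqrt (1 - ‖a‖ ^ 2) - 1) / ‖a‖ ^ 2 : ℝ) : ℂ) * ((‖a‖ : ℂ)) ^ 2
          = ((((Real.sqrt (1 - ‖a‖ ^ 2) - 1) / ‖a‖ ^ 2) * ‖a‖ ^ 2 : ℝ) : ℂ) := by push_cast; ring
        _ = (((Real.sqrt (1 - ‖a‖ ^ 2) - 1 : ℝ)) : ℂ) := by rw [h1]
        _ = S - 1 := by rw [hSdef]; push_cast; ring
    have hSc : (starRingEnd ℂ) S = S := Complex.conj_ofReal _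
    have hTc : (starRingEnd ℂ) T = T := Complex.conj_ofReal _
    set p : ℂ := herm z a with hp
    set q : ℂ := herm z u with hq'
    set r : ℂ := herm a u with hr
    have hmz : moeb a z = (1 - p)⁻¹ • ((T * p) • a - S • z + a) := by
      rw [moeb, if_neg h0]
    have hmu : moeb a u = (1 - herm u a)⁻¹ • ((T * herm u a) • a - S • u + a) := by
      rw [moeb, if_neg h0]
    have hza : herm (moeb a z) a = (1 - p)⁻¹ * (T * p * A - S * p + A) := by
      rw [hmz]
      simp only [herm_smul_left, herm_add_left, herm_sub_left, herm_self, ← hAdef, ← hp]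
    have hzu : herm (moeb a z) u = (1 - p)⁻¹ * (T * p * r - S * q + r) := by
      rw [hmz]
      simp only [herm_smul_left, herm_add_left, herm_sub_left, ← hp, ← hq', ← hr]
    have hmain : herm (moeb a z) (moeb a u)
        = (1 - r)⁻¹ * (T * r * herm (moeb a z) a - S * herm (moeb a z) u
            + herm (moeb a z) a) := by
      conv_lhs => rw [hmu]
      simp only [herm_smul_right, herm_add_right, herm_sub_right, map_mul, map_inv₀, map_sub,
        map_one, herm_conj, hSc, hTc, ← hr]
    have hkey : herm (moeb a z) (moeb a u) * ((1 - p) * (1 - r))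
        = T * r * (T * p * A - S * p + A) - S * (T * p * r - S * q + r)
            + (T * p * A - S * p + A) := by
      have hip : (1 - p)⁻¹ * (1 - p) = 1 := inv_mul_cancel₀ hz
      have hir : (1 - r)⁻¹ * (1 - r) = 1 := inv_mul_cancel₀ hu
      rw [hmain, hza, hzu]
      linear_combination
        ((T * r * (T * p * A - S * p + A) - S * (T * p * r - S * q + r)
            + (T * p * A - S * p + A)) * ((1 - r)⁻¹ * (1 - r))) * hip
        + (T * r * (T * p * A - S * p + A) - S * (T * p * r - S * q + r)
            + (T * p * A - S * p + A)) * hir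
    have hqA : (1 - herm (moeb a z) (moeb a u)) * ((1 - p) * (1 - r)) * A
        = (1 - A) * (1 - q) * A := by
      linear_combination (-A) * hkey
        + (-A * (r + p) - A * T * p * r + p * r * (S + 1)) * hG1
        + (p * r - A * q) * hG2
    have hAne2 : A ≠ 0 := by rw [hAdef]; exact pow_ne_zero 2 hAne
    exact mul_right_cancel₀ hAne2 hqA

end PkerAux

open PkerAux

/-- Addition theorem for the Poisson–Helgason kernel: for all `λ ∈ ℂ`, `ζ ∈ S` and
`z, w` in the open unit ball, `P_{λ,ζ}(φ_w(z)) = P_{λ,ζ}(w) · P_{λ,φ_w(ζ)}(z)`. -/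
theorem Pker_addition (n : ℕ) (lam : ℂ) (ζ z w : Cn n)
    (hζ : ‖ζ‖ = 1) (hz : ‖z‖ < 1) (hw : ‖w‖ < 1) :
    Pker n lam ζ (moeb w z) = Pker n lam ζ w * Pker n lam (moeb w ζ) z := by
  have hz0 := norm_nonneg z
  have hw0 := norm_nonneg w
  have hzw : 1 - herm z w ≠ 0 := one_sub_herm_ne_zero (by nlinarith)
  have hwz : 1 - herm w z ≠ 0 := one_sub_herm_ne_zero (by nlinarith)
  have hwζ : 1 - herm w ζ ≠ 0 := one_sub_herm_ne_zero (by rw [hζ]; nlinarith)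
  -- norm identity from lemma A
  have EA := moeb_herm_lemA w z z hw hzw hwz
  rw [herm_self, herm_self] at EA
  have hconj : (1 - herm z w) * (1 - herm w z)
      = (((‖1 - herm z w‖) ^ 2 : ℝ) : ℂ) := by
    rw [← herm_conj z w,
      show (1 : ℂ) - (starRingEnd ℂ) (herm z w) = (starRingEnd ℂ) (1 - herm z w) by
        rw [map_sub, map_one],
      Complex.mul_conj, Complex.normSq_eq_norm_sq]
  rw [hconj] at EA
  have E1 : (1 - ‖moeb w z‖ ^ 2) * (‖1 - herm z w‖) ^ 2
      = (1 - ‖w‖ ^ 2) * (1 - ‖z‖ ^ 2) := by exact_mod_cast EA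
  have hd : 0 < ‖1 - herm z w‖ := norm_pos_iff.mpr hzw
  have hd2 : 0 < ‖1 - herm z w‖ ^ 2 := pow_pos hd 2
  have hw1 : 0 < 1 - ‖w‖ ^ 2 := by nlinarith
  have hz1 : 0 < 1 - ‖z‖ ^ 2 := by nlinarith
  have hpos : 0 < (1 - ‖w‖ ^ 2) * (1 - ‖z‖ ^ 2) := mul_pos hw1 hz1
  have hφ2 : 0 < 1 - ‖moeb w z‖ ^ 2 := by nlinarith [E1, hd2, hpos]
  have hφ : ‖moeb w z‖ < 1 := by nlinarith [hφ2, mul_self_nonneg (‖moeb w z‖ - 1)]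
  have hφ0 := norm_nonneg (moeb w z)
  -- boundary identity from lemma B
  have EB := moeb_herm_lemB w z ζ hw hzw hwζ
  have E2 : ‖1 - herm (moeb w z) ζ‖ * ‖1 - herm z w‖
      = ‖1 - herm z (moeb w ζ)‖ * ‖1 - herm w ζ‖ := by
    have := congrArg norm EB
    simpa only [norm_mul] using this
  have hφζ : 1 - herm (moeb w z) ζ ≠ 0 := one_sub_herm_ne_zero (by rw [hζ]; nlinarith)
  have hb1 : 0 < ‖1 - herm (moeb w z) ζ‖ := norm_pos_iff.mpr hφζ
  have he : 0 < ‖1 - herm w ζ‖ := norm_pos_iff.mpr hwζ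
  have hzζ' : 1 - herm z (moeb w ζ) ≠ 0 := by
    intro h
    exact mul_ne_zero hφζ hzw (EB.trans (by rw [h, zero_mul]))
  have hc1 : 0 < ‖1 - herm z (moeb w ζ)‖ := norm_pos_iff.mpr hzζ'
  -- the ratio identity
  have hρ : (1 - ‖moeb w z‖ ^ 2) / (‖1 - herm (moeb w z) ζ‖) ^ 2
      = ((1 - ‖w‖ ^ 2) / (‖1 - herm w ζ‖) ^ 2)
        * ((1 - ‖z‖ ^ 2) / (‖1 - herm z (moeb w ζ)‖) ^ 2) := by
    rw [div_mul_div_comm, div_eq_div_iff (by positivity) (by positivity)]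
    linear_combination (‖1 - herm (moeb w z) ζ‖) ^ 2 * E1
      - ((1 - ‖moeb w z‖ ^ 2) * (‖1 - herm z (moeb w ζ)‖ * ‖1 - herm w ζ‖
          + ‖1 - herm (moeb w z) ζ‖ * ‖1 - herm z w‖)) * E2
  -- assemble
  rw [Pker, Pker, Pker, hρ, Complex.ofReal_mul]
  exact Complex.mul_cpow_ofReal_nonneg
    (div_nonneg (by nlinarith) (by positivity))
    (div_nonneg (by nlinarith) (by positivity)) _
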